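/- Let d > 0 be a squarefree integer and let 𝔞 be a nonzero ideal of ℤ[√−d]. Suppose 𝔞 = C ∪ D with C ∩ D = ∅. Then C is fractionally dense in ℂ or D is fractionally dense in ℂ; that is, at least one of the quotient sets R(C) = {x/y : x, y ∈ C, y ≠ 0} and R(D) = {x/y : x, y ∈ D, y ≠ 0} is dense in ℂ (under the embedding of ℤ[√−d] into ℂ sending a + b√−d to a + b√d·i). -/

import Mathlib

open Complex Filter

noncomputable section AuxStmt10

private noncomputable def om (d : ℕ) : ℂ := (Real.sqrt d : ℂ) * Complex.I

private lemma om_sq (d : ℕ) : om d ^ 2 = -(d:ℂ) := by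
  simp [om, mul_pow, Complex.I_sq]
  norm_cast
  rw [Real.sq_sqrt (Nat.cast_nonneg d)]

private lemma Rmem (d : ℕ) (a b : ℤ) : (a:ℂ) + (b:ℂ) * om d ∈ Subring.closure {om d} := by
  exact add_mem (intCast_mem _ a)
    (mul_mem (intCast_mem _ b) (Subring.subset_closure rfl))

private noncomputable def Kpt (d : ℕ) (a b : ℚ) : ℂ := (a:ℂ) + (b:ℂ) * om d

private lemma Kpt_mul (d : ℕ) (a b c e : ℚ) :
    Kpt d a b * Kpt d c e = Kpt d (a*c - d*b*e) (a*e + b*c) := by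
  unfold Kpt
  push_cast
  linear_combination ((b:ℂ) * (e:ℂ)) * om_sq d

private lemma Kpt_div (d : ℕ) (a b : ℚ) :
    ∃ p ∈ Subring.closure {om d}, ∃ m : ℕ, 0 < m ∧ Kpt d a b = p / m := by
  refine ⟨((a.num * b.den : ℤ) : ℂ) + ((b.num * a.den : ℤ) : ℂ) * om d, Rmem d _ _,
    a.den * b.den, by positivity, ?_⟩
  have ha : (a.den : ℂ) ≠ 0 := by exact_mod_cast a.den_nz
  have hb : (b.den : ℂ) ≠ 0 := by exact_mod_cast b.den_nz
  have hA : (a:ℂ) = (a.num : ℂ) / a.den := by exact_mod_cast (Rat.cast_def a : (a:ℂ) = _)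
  have hB : (b:ℂ) = (b.num : ℂ) / b.den := by exact_mod_cast (Rat.cast_def b : (b:ℂ) = _)
  unfold Kpt
  rw [hA, hB]
  push_cast
  field_simp

private lemma Kpt_dense (d : ℕ) (hd : 0 < d) (z : ℂ) (ε : ℝ) (hε : 0 < ε) :
    ∃ a b : ℚ, dist (Kpt d a b) z < ε := by
  have hs : 0 < Real.sqrt d := Real.sqrt_pos.mpr (by exact_mod_cast hd)
  obtain ⟨a, ha⟩ := exists_rat_near z.re (half_pos hε)
  obtain ⟨b, hb⟩ := exists_rat_near (z.im / Real.sqrt d) (by positivity : 0 < ε / (2 * Real.sqrt d))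
  refine ⟨a, b, ?_⟩
  have him : |(b:ℝ) * Real.sqrt d - z.im| < ε / 2 := by
    have h2 : |z.im / Real.sqrt d - b| * Real.sqrt d < ε / (2 * Real.sqrt d) * Real.sqrt d :=
      mul_lt_mul_of_pos_right hb hs
    calc |(b:ℝ) * Real.sqrt d - z.im| = |z.im / Real.sqrt d - b| * Real.sqrt d := by
          rw [abs_sub_comm]
          have : z.im - (b:ℝ) * Real.sqrt d = (z.im / Real.sqrt d - b) * Real.sqrt d := by
            field_simp
          rw [this, abs_mul, abs_of_pos hs]
      _ < ε / (2 * Real.sqrt d) * Real.sqrt d := h2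
      _ = ε / 2 := by field_simp
  set w : ℂ := (a:ℂ) + (b:ℂ) * om d with hw
  have hre : w.re = a := by simp [hw, om]
  have him2 : w.im = (b:ℝ) * Real.sqrt d := by simp [hw, om]
  have : dist w z ≤ |w.re - z.re| + |w.im - z.im| := by
    rw [Complex.dist_eq]
    exact Complex.norm_le_abs_re_add_abs_im (w - z)
  rw [hre, him2] at this
  rw [abs_sub_comm z.re] at ha
  calc dist w z ≤ |(a:ℝ) - z.re| + |(b:ℝ) * Real.sqrt d - z.im| := this
    _ < ε / 2 + ε / 2 := add_lt_add ha him
    _ = ε := by ring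

private lemma root_tendsto (u : ℂ) :
    Tendsto (fun n : ℕ => Complex.exp (Complex.log u * (n:ℂ)⁻¹)) atTop (nhds 1) := by
  have h1 : Tendsto (fun n : ℕ => ((n:ℂ))⁻¹) atTop (nhds 0) := by
    have : Tendsto (fun n : ℕ => 1 / (n:ℝ)) atTop (nhds 0) := tendsto_one_div_atTop_nhds_zero_nat
    have h2 := (Complex.continuous_ofReal.tendsto 0).comp this
    have h3 : (Complex.ofReal ∘ fun n : ℕ => 1 / (n:ℝ)) = fun n : ℕ => ((n:ℂ))⁻¹ := by
      funext n; simp [Function.comp, one_div]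
    rw [← h3]
    simpa using h2
  have h3 : Tendsto (fun n : ℕ => Complex.log u * (n:ℂ)⁻¹) atTop (nhds 0) := by
    simpa using h1.const_mul (Complex.log u)
  simpa [Function.comp_def] using (Complex.continuous_exp.tendsto 0).comp h3

private lemma root_pow (u : ℂ) (hu : u ≠ 0) (n : ℕ) (hn : n ≠ 0) :
    (Complex.exp (Complex.log u * (n:ℂ)⁻¹)) ^ n = u := by
  rw [← Complex.exp_nat_mul]
  have hn' : (n:ℂ) ≠ 0 := Nat.cast_ne_zero.mpr hn
  rw [show (n:ℂ) * (Complex.log u * (n:ℂ)⁻¹) = Complex.log u by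
    field_simp]
  exact Complex.exp_log hu

private lemma nodense_ball (s : Set ℂ) (h : ¬ Dense s) :
    ∃ c ε, 0 < ε ∧ (∀ w ∈ Metric.ball c ε, w ≠ 0) ∧ ∀ y ∈ s, y ∉ Metric.ball c ε := by
  rw [Dense] at h
  push_neg at h
  obtain ⟨x, hx⟩ := h
  rw [Metric.mem_closure_iff] at hx
  push_neg at hx
  obtain ⟨ε, hε, hsep⟩ := hx
  obtain ⟨c, hcx, hc0⟩ : ∃ c, dist c x < ε/2 ∧ c ≠ 0 := by
    by_cases hx0 : x = 0
    · refine ⟨(ε/4 : ℝ), ?_, ?_⟩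
      · rw [hx0]
        simp [Complex.dist_eq]
        rw [abs_of_pos hε]
        linarith
      · simp only [ne_eq, Complex.ofReal_eq_zero]
        positivity
    · exact ⟨x, by simpa using half_pos hε, hx0⟩
  refine ⟨c, min (ε/2 - dist c x) (‖c‖/2), ?_, ?_, ?_⟩
  · have : 0 < ‖c‖ := norm_pos_iff.mpr hc0
    apply lt_min <;> [linarith; positivity]
  · intro w hw
    rw [Metric.mem_ball] at hw
    have h1 : dist w c < ‖c‖/2 := lt_of_lt_of_le hw (min_le_right _ _)
    have h2 : dist c 0 ≤ dist c w + dist w 0 := dist_triangle _ _ _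
    rw [dist_comm c w] at h2
    simp only [dist_zero_right] at h2
    intro h0
    rw [h0] at h1 h2
    simp at h1 h2
    have hpos : 0 < ‖c‖ := norm_pos_iff.mpr hc0
    linarith
  · intro y hy hmem
    rw [Metric.mem_ball] at hmem
    have h1 : dist y c < ε/2 - dist c x := lt_of_lt_of_le hmem (min_le_left _ _)
    have h2 : dist x y ≤ dist x c + dist c y := dist_triangle _ _ _
    rw [dist_comm x c, dist_comm c y] at h2
    have := hsep y hy
    linarith

private lemma pick (d : ℕ) (hd : 0 < d) (t σ₀ cU cV : ℂ) (εU εV : ℝ)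
    (htU : t ∈ Metric.ball cU εU) (ht0 : t ≠ 0)
    (hσV : σ₀ ∈ Metric.ball cV εV) (hσ0 : σ₀ ≠ 0) :
    ∃ (n : ℕ) (a b : ℚ), 0 < n ∧
      (Kpt d a b)^n ∈ Metric.ball cU εU ∧
      σ₀ * (Kpt d a b) ∈ Metric.ball cV εV := by
  rw [Metric.mem_ball] at htU hσV
  set δU := εU - dist t cU with hδU
  have hδU0 : 0 < δU := by simp [hδU]; linarith
  set δV := εV - dist σ₀ cV with hδV
  have hδV0 : 0 < δV := by simp [hδV]; linarith
  have hσn : 0 < ‖σ₀‖ := norm_pos_iff.mpr hσ0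
  set η := δV / ‖σ₀‖ with hη
  have hη0 : 0 < η := by positivity
  obtain ⟨N, hN⟩ := (Metric.tendsto_atTop.mp (root_tendsto t)) (η/2) (by positivity)
  set n := N + 1 with hn
  set wn := Complex.exp (Complex.log t * (n:ℂ)⁻¹) with hwn
  have hwn1 : dist wn 1 < η/2 := hN n (by omega)
  have hwnt : wn ^ n = t := root_pow t ht0 n (by omega)
  have hcont : ContinuousAt (fun w : ℂ => w^n) wn := (continuous_pow n).continuousAt
  obtain ⟨δ, hδ0, hδ⟩ := Metric.continuousAt_iff.mp hcont δU hδU0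
  obtain ⟨a, b, hab⟩ := Kpt_dense d hd wn (min δ (η/2)) (by positivity)
  set w := Kpt d a b with hw
  refine ⟨n, a, b, by omega, ?_, ?_⟩
  · rw [Metric.mem_ball]
    have h1 : dist (w^n) t < δU := by
      have := hδ (lt_of_lt_of_le hab (min_le_left _ _))
      rwa [hwnt] at this
    calc dist (w^n) cU ≤ dist (w^n) t + dist t cU := dist_triangle _ _ _
      _ < δU + dist t cU := by linarith
      _ = εU := by simp [hδU]
  · rw [Metric.mem_ball]
    have hw1 : dist w 1 < η := by
      calc dist w 1 ≤ dist w wn + dist wn 1 := dist_triangle _ _ _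
        _ < min δ (η/2) + η/2 := by exact add_lt_add hab hwn1
        _ ≤ η/2 + η/2 := by gcongr; exact min_le_right _ _
        _ = η := by ring
    have h2 : dist (σ₀ * w) σ₀ < δV := by
      rw [dist_eq_norm]
      have h3 : σ₀ * w - σ₀ = σ₀ * (w - 1) := by ring
      rw [h3, norm_mul]
      have h4 : ‖w - 1‖ = dist w 1 := (dist_eq_norm w 1).symm
      rw [h4]
      calc ‖σ₀‖ * dist w 1 < ‖σ₀‖ * η := mul_lt_mul_of_pos_left hw1 hσn
        _ = δV := by
            rw [hη]
            have hne : ‖σ₀‖ ≠ 0 := norm_ne_zero_iff.mpr hσ0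
            field_simp
    calc dist (σ₀ * w) cV ≤ dist (σ₀ * w) σ₀ + dist σ₀ cV := dist_triangle _ _ _
      _ < δV + dist σ₀ cV := by linarith
      _ = εV := by simp [hδV]

set_option maxHeartbeats 1000000 in
private lemma chain_core (Rs : Subring ℂ) (A C' D' : Set ℂ) (g : ℂ)
    (hACD : A = C' ∪ D')
    (hAg : ∀ w ∈ Rs, w * g ∈ A) (hg : g ≠ 0)
    (U V : Set ℂ)
    (hCU : ∀ a ∈ C', ∀ b ∈ C', b ≠ 0 → a / b ∉ U)
    (hDV : ∀ a ∈ D', ∀ b ∈ D', b ≠ 0 → a / b ∉ V)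
    (p₀ q₀ r₀ s₀ r₁ s₁ E : ℂ)
    (hp₀ : p₀ ∈ Rs) (hq₀ : q₀ ∈ Rs) (hr₀ : r₀ ∈ Rs) (hs₀ : s₀ ∈ Rs)
    (hr₁ : r₁ ∈ Rs) (hs₁ : s₁ ∈ Rs) (hE : E ∈ Rs)
    (hp₀0 : p₀ ≠ 0) (hq₀0 : q₀ ≠ 0) (hr₀0 : r₀ ≠ 0) (hs₀0 : s₀ ≠ 0)
    (hr₁0 : r₁ ≠ 0) (hs₁0 : s₁ ≠ 0) (hE0 : E ≠ 0)
    (hρU : p₀ / q₀ ∈ U) (hσV : r₀ / s₀ ∈ V) (hσ₁V : r₁ / s₁ ∈ V)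
    (n : ℕ)
    (hx₀ : E * (q₀*s₁)^n * (p₀*r₀)^n * g ∈ C') :
    ((r₁ * s₀) / (r₀ * s₁))^n ∉ U := by
  have NZ : ∀ a b : ℂ, a ≠ 0 → b ≠ 0 → a * b ≠ 0 := fun a b ha hb => mul_ne_zero ha hb
  have hqs₁ : (q₀*s₁) ≠ 0 := NZ _ _ hq₀0 hs₁0
  have hpr₀ : (p₀*r₀) ≠ 0 := NZ _ _ hp₀0 hr₀0
  have hpr₁ : (p₀*r₁) ≠ 0 := NZ _ _ hp₀0 hr₁0
  have hqs₀ : (q₀*s₀) ≠ 0 := NZ _ _ hq₀0 hs₀0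
  set u : ℕ → ℂ := fun k => E * (q₀*s₁)^(n-k) * (p₀*r₀)^n * (p₀*r₁)^k * g with hu
  set z : ℕ → ℂ := fun j => E * (p₀*r₀)^(n-j) * (p₀*r₁)^n * (q₀*s₀)^j * g with hz
  have hune : ∀ k, u k ≠ 0 := fun k =>
    NZ _ _ (NZ _ _ (NZ _ _ (NZ _ _ hE0 (pow_ne_zero _ hqs₁)) (pow_ne_zero _ hpr₀))
      (pow_ne_zero _ hpr₁)) hg
  have hzne : ∀ j, z j ≠ 0 := fun j =>
    NZ _ _ (NZ _ _ (NZ _ _ (NZ _ _ hE0 (pow_ne_zero _ hpr₀)) (pow_ne_zero _ hpr₁))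
      (pow_ne_zero _ hqs₀)) hg
  have humem : ∀ k, u k ∈ A := by
    intro k
    have : u k = (E * (q₀*s₁)^(n-k) * (p₀*r₀)^n * (p₀*r₁)^k) * g := by simp [hu]
    rw [this]
    exact hAg _ (mul_mem (mul_mem (mul_mem hE (pow_mem (mul_mem hq₀ hs₁) _))
      (pow_mem (mul_mem hp₀ hr₀) _)) (pow_mem (mul_mem hp₀ hr₁) _))
  have hzmem : ∀ j, z j ∈ A := by
    intro j
    have : z j = (E * (p₀*r₀)^(n-j) * (p₀*r₁)^n * (q₀*s₀)^j) * g := by simp [hz]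
    rw [this]
    exact hAg _ (mul_mem (mul_mem (mul_mem hE (pow_mem (mul_mem hp₀ hr₀) _))
      (pow_mem (mul_mem hp₀ hr₁) _)) (pow_mem (mul_mem hq₀ hs₀) _))
  have claim1 : ∀ k, k ≤ n → u k ∈ C' := by
    intro k
    induction k with
    | zero => intro _; simpa [hu] using hx₀
    | succ k ih =>
      intro hk1
      have hk : k < n := by omega
      have uk : u k ∈ C' := ih (by omega)
      set v : ℂ := E * (p₀*s₁) * (q₀*s₁)^(n-1-k) * (p₀*r₀)^n * (p₀*r₁)^k * g with hv
      have hvmem : v ∈ A := by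
        have : v = (E * (p₀*s₁) * (q₀*s₁)^(n-1-k) * (p₀*r₀)^n * (p₀*r₁)^k) * g := by simp [hv]
        rw [this]
        exact hAg _ (mul_mem (mul_mem (mul_mem (mul_mem hE (mul_mem hp₀ hs₁))
          (pow_mem (mul_mem hq₀ hs₁) _)) (pow_mem (mul_mem hp₀ hr₀) _))
          (pow_mem (mul_mem hp₀ hr₁) _))
      have hvne : v ≠ 0 :=
        NZ _ _ (NZ _ _ (NZ _ _ (NZ _ _ (NZ _ _ hE0 (NZ _ _ hp₀0 hs₁0)) (pow_ne_zero _ hqs₁))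
          (pow_ne_zero _ hpr₀)) (pow_ne_zero _ hpr₁)) hg
      have hvu : v = (p₀/q₀) * u k := by
        have hnk : n - k = (n-1-k) + 1 := by omega
        simp only [hv, hu, hnk, pow_succ]
        field_simp
      have hvD : v ∈ D' := by
        rcases (hACD ▸ hvmem) with hC | hD
        · exfalso
          apply hCU v hC (u k) uk (hune k)
          rw [hvu, mul_div_assoc, div_self (hune k), mul_one]
          exact hρU
        · exact hD
      have huv : u (k+1) = (r₁/s₁) * v := by
        simp only [hu, hv, pow_succ]
        have : n - (k+1) = n - 1 - k := by omega
        rw [this]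
        field_simp
      rcases (hACD ▸ humem (k+1)) with hC | hD
      · exact hC
      · exfalso
        apply hDV (u (k+1)) hD v hvD hvne
        rw [huv, mul_div_assoc, div_self hvne, mul_one]
        exact hσ₁V
  have hz0 : z 0 = u n := by simp [hz, hu]
  have claim2 : ∀ j, j ≤ n → z j ∈ C' := by
    intro j
    induction j with
    | zero => intro _; rw [hz0]; exact claim1 n le_rfl
    | succ j ih =>
      intro hj1
      have hj : j < n := by omega
      have zj : z j ∈ C' := ih (by omega)
      set y : ℂ := E * (q₀*r₀) * (p₀*r₀)^(n-1-j) * (p₀*r₁)^n * (q₀*s₀)^j * g with hy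
      have hymem : y ∈ A := by
        have : y = (E * (q₀*r₀) * (p₀*r₀)^(n-1-j) * (p₀*r₁)^n * (q₀*s₀)^j) * g := by simp [hy]
        rw [this]
        exact hAg _ (mul_mem (mul_mem (mul_mem (mul_mem hE (mul_mem hq₀ hr₀))
          (pow_mem (mul_mem hp₀ hr₀) _)) (pow_mem (mul_mem hp₀ hr₁) _))
          (pow_mem (mul_mem hq₀ hs₀) _))
      have hyne : y ≠ 0 :=
        NZ _ _ (NZ _ _ (NZ _ _ (NZ _ _ (NZ _ _ hE0 (NZ _ _ hq₀0 hr₀0)) (pow_ne_zero _ hpr₀))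
          (pow_ne_zero _ hpr₁)) (pow_ne_zero _ hqs₀)) hg
      have hzy : z j = (p₀/q₀) * y := by
        have hnj : n - j = (n-1-j) + 1 := by omega
        simp only [hz, hy, hnj, pow_succ]
        field_simp
      have hyD : y ∈ D' := by
        rcases (hACD ▸ hymem) with hC | hD
        · exfalso
          apply hCU (z j) zj y hC hyne
          rw [hzy, mul_div_assoc, div_self hyne, mul_one]
          exact hρU
        · exact hD
      have hyz : y = (r₀/s₀) * z (j+1) := by
        simp only [hy, hz, pow_succ]
        have : n - (j+1) = n - 1 - j := by omega
        rw [this]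
        field_simp
      rcases (hACD ▸ hzmem (j+1)) with hC | hD
      · exact hC
      · exfalso
        apply hDV y hyD (z (j+1)) hD (hzne (j+1))
        rw [hyz, mul_div_assoc, div_self (hzne (j+1)), mul_one]
        exact hσV
  have hratio : z n / u 0 = ((r₁ * s₀) / (r₀ * s₁))^n := by
    rw [div_pow, div_eq_div_iff (hune 0) (pow_ne_zero _ (NZ _ _ hr₀0 hs₁0))]
    simp only [hz, hu]
    simp only [Nat.sub_self, Nat.sub_zero, pow_zero]
    ring
  rw [← hratio]
  exact hCU (z n) (claim2 n le_rfl) (u 0) (claim1 0 (Nat.zero_le n)) (hune 0)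

end AuxStmt10

/-- Theorem 4: for a squarefree integer `d > 0` and a nonzero ideal `𝔞` of
`ℤ[√-d]` (realized as the subring of `ℂ` generated by `√d * I`), any
two-partition `𝔞 = C ∪ D` has at least one part fractionally dense in `ℂ`. -/
theorem stmt_10 (d : ℕ) (hd : 0 < d) (hsq : Squarefree d)
    (𝔞 : Ideal ↥(Subring.closure {((Real.sqrt d : ℂ) * Complex.I)}))
    (h𝔞 : 𝔞 ≠ ⊥)
    (C D : Set ↥(Subring.closure {((Real.sqrt d : ℂ) * Complex.I)}))
    (hunion : C ∪ D = (𝔞 : Set ↥(Subring.closure {((Real.sqrt d : ℂ) * Complex.I)})))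
    (hdisj : C ∩ D = ∅) :
    Dense {z : ℂ | ∃ x ∈ C, ∃ y ∈ C, (y : ℂ) ≠ 0 ∧ z = (x : ℂ) / (y : ℂ)} ∨
    Dense {z : ℂ | ∃ x ∈ D, ∃ y ∈ D, (y : ℂ) ≠ 0 ∧ z = (x : ℂ) / (y : ℂ)} := by
  by_contra hcon
  push_neg at hcon
  obtain ⟨hndC, hndD⟩ := hcon
  obtain ⟨cU, εU, hεU, hU0, hUav⟩ := nodense_ball _ hndC
  obtain ⟨cV, εV, hεV, hV0, hVav⟩ := nodense_ball _ hndD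
  -- the closure subring, seen through `om`
  obtain ⟨gg, hggmem, hgg0⟩ := Submodule.exists_mem_ne_zero_of_ne_bot h𝔞
  set g : ℂ := (gg : ℂ) with hgdef
  have hg : g ≠ 0 := by
    simp only [hgdef, ne_eq, ZeroMemClass.coe_eq_zero]
    exact hgg0
  set C' : Set ℂ := (fun x : ↥(Subring.closure {((Real.sqrt d : ℂ) * Complex.I)}) => (x:ℂ)) '' C
    with hC'
  set D' : Set ℂ := (fun x : ↥(Subring.closure {((Real.sqrt d : ℂ) * Complex.I)}) => (x:ℂ)) '' D
    with hD'
  set A : Set ℂ := (fun x : ↥(Subring.closure {((Real.sqrt d : ℂ) * Complex.I)}) => (x:ℂ)) ''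
    (𝔞 : Set ↥(Subring.closure {((Real.sqrt d : ℂ) * Complex.I)})) with hA
  have hACD : A = C' ∪ D' := by
    rw [hA, hC', hD', ← Set.image_union, hunion]
  have hAg : ∀ w ∈ Subring.closure {om d}, w * g ∈ A := by
    intro w hw
    refine ⟨(⟨w, hw⟩ : ↥(Subring.closure {((Real.sqrt d : ℂ) * Complex.I)})) * gg,
      Ideal.mul_mem_left _ _ hggmem, ?_⟩
    simp [hgdef]
  have hCU : ∀ a ∈ C', ∀ b ∈ C', b ≠ 0 → a / b ∉ Metric.ball cU εU := by
    rintro a ⟨x, hx, rfl⟩ b ⟨y, hy, rfl⟩ hb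
    exact hUav _ ⟨x, hx, y, hy, hb, rfl⟩
  have hDV : ∀ a ∈ D', ∀ b ∈ D', b ≠ 0 → a / b ∉ Metric.ball cV εV := by
    rintro a ⟨x, hx, rfl⟩ b ⟨y, hy, rfl⟩ hb
    exact hVav _ ⟨x, hx, y, hy, hb, rfl⟩
  -- a point of U
  obtain ⟨aρ, bρ, hρd⟩ := Kpt_dense d hd cU εU hεU
  set ρ₀ : ℂ := Kpt d aρ bρ with hρ₀def
  have hρU : ρ₀ ∈ Metric.ball cU εU := Metric.mem_ball.mpr hρd
  have hρ0 : ρ₀ ≠ 0 := hU0 _ hρU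
  obtain ⟨p₀, hp₀Rs, mq, hmq, hρeq⟩ := Kpt_div d aρ bρ
  set q₀ : ℂ := (mq : ℂ) with hq₀def
  have hq₀Rs : q₀ ∈ Subring.closure {om d} := by
    have := Rmem d (mq : ℤ) 0
    simpa [hq₀def] using this
  have hq₀0 : q₀ ≠ 0 := by
    simp only [hq₀def, ne_eq, Nat.cast_eq_zero]
    omega
  have hp₀0 : p₀ ≠ 0 := by
    intro h
    apply hρ0
    rw [hρ₀def, hρeq, h, zero_div]
  -- a point of V
  obtain ⟨aσ, bσ, hσd⟩ := Kpt_dense d hd cV εV hεV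
  set σ₀ : ℂ := Kpt d aσ bσ with hσ₀def
  have hσV : σ₀ ∈ Metric.ball cV εV := Metric.mem_ball.mpr hσd
  have hσ0 : σ₀ ≠ 0 := hV0 _ hσV
  obtain ⟨r₀, hr₀Rs, ms, hms, hσeq⟩ := Kpt_div d aσ bσ
  set s₀ : ℂ := (ms : ℂ) with hs₀def
  have hs₀Rs : s₀ ∈ Subring.closure {om d} := by
    have := Rmem d (ms : ℤ) 0
    simpa [hs₀def] using this
  have hs₀0 : s₀ ≠ 0 := by
    simp only [hs₀def, ne_eq, Nat.cast_eq_zero]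
    omega
  have hr₀0 : r₀ ≠ 0 := by
    intro h
    apply hσ0
    rw [hσ₀def, hσeq, h, zero_div]
  -- pick for the C-side
  obtain ⟨n, a1, b1, hn, hw1U, hσw1V⟩ := pick d hd ρ₀ σ₀ cU cV εU εV hρU hρ0 hσV hσ0
  set w1 : ℂ := Kpt d a1 b1 with hw1def
  have hσ₁mul : σ₀ * w1 = Kpt d (aσ*a1 - d*bσ*b1) (aσ*b1 + bσ*a1) := by
    rw [hσ₀def, hw1def]; exact Kpt_mul d aσ bσ a1 b1
  obtain ⟨r₁, hr₁Rs, ms1, hms1, hσ₁eq'⟩ := Kpt_div d (aσ*a1 - d*bσ*b1) (aσ*b1 + bσ*a1)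
  set s₁ : ℂ := (ms1 : ℂ) with hs₁def
  have hσ₁eq : σ₀ * w1 = r₁ / s₁ := by rw [hσ₁mul]; exact hσ₁eq'
  have hs₁Rs : s₁ ∈ Subring.closure {om d} := by
    have := Rmem d (ms1 : ℤ) 0
    simpa [hs₁def] using this
  have hs₁0 : s₁ ≠ 0 := by
    simp only [hs₁def, ne_eq, Nat.cast_eq_zero]
    omega
  have hσ₁0 : σ₀ * w1 ≠ 0 := hV0 _ hσw1V
  have hr₁0 : r₁ ≠ 0 := by
    intro h
    apply hσ₁0
    rw [hσ₁eq, h, zero_div]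
  have hσ₁V : r₁ / s₁ ∈ Metric.ball cV εV := by rw [← hσ₁eq]; exact hσw1V
  -- pick for the D-side
  obtain ⟨n', a2, b2, hn', hw2V, hρw2U⟩ := pick d hd σ₀ ρ₀ cV cU εV εU hσV hσ0 hρU hρ0
  set w2 : ℂ := Kpt d a2 b2 with hw2def
  have hρ₁mul : ρ₀ * w2 = Kpt d (aρ*a2 - d*bρ*b2) (aρ*b2 + bρ*a2) := by
    rw [hρ₀def, hw2def]; exact Kpt_mul d aρ bρ a2 b2
  obtain ⟨p₁, hp₁Rs, mq1, hmq1, hρ₁eq'⟩ := Kpt_div d (aρ*a2 - d*bρ*b2) (aρ*b2 + bρ*a2)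
  set q₁ : ℂ := (mq1 : ℂ) with hq₁def
  have hρ₁eq : ρ₀ * w2 = p₁ / q₁ := by rw [hρ₁mul]; exact hρ₁eq'
  have hq₁Rs : q₁ ∈ Subring.closure {om d} := by
    have := Rmem d (mq1 : ℤ) 0
    simpa [hq₁def] using this
  have hq₁0 : q₁ ≠ 0 := by
    simp only [hq₁def, ne_eq, Nat.cast_eq_zero]
    omega
  have hρ₁0 : ρ₀ * w2 ≠ 0 := hU0 _ hρw2U
  have hp₁0 : p₁ ≠ 0 := by
    intro h
    apply hρ₁0
    rw [hρ₁eq, h, zero_div]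
  have hρ₁U : p₁ / q₁ ∈ Metric.ball cU εU := by rw [← hρ₁eq]; exact hρw2U
  -- fraction hypotheses
  have hρUfrac : p₀ / q₀ ∈ Metric.ball cU εU := by
    rw [show p₀ / q₀ = ρ₀ by rw [hρ₀def, hρeq, hq₀def]]
    exact hρU
  have hσVfrac : r₀ / s₀ ∈ Metric.ball cV εV := by
    rw [show r₀ / s₀ = σ₀ by rw [hσ₀def, hσeq, hs₀def]]
    exact hσV
  -- the starting point
  set E : ℂ := (s₀*q₁)^n' * (r₀*p₀)^n' with hEdef
  set E' : ℂ := (q₀*s₁)^n * (p₀*r₀)^n with hE'def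
  have hERs : E ∈ Subring.closure {om d} :=
    mul_mem (pow_mem (mul_mem hs₀Rs hq₁Rs) _) (pow_mem (mul_mem hr₀Rs hp₀Rs) _)
  have hE'Rs : E' ∈ Subring.closure {om d} :=
    mul_mem (pow_mem (mul_mem hq₀Rs hs₁Rs) _) (pow_mem (mul_mem hp₀Rs hr₀Rs) _)
  have hE0 : E ≠ 0 :=
    mul_ne_zero (pow_ne_zero _ (mul_ne_zero hs₀0 hq₁0)) (pow_ne_zero _ (mul_ne_zero hr₀0 hp₀0))
  have hE'0 : E' ≠ 0 :=
    mul_ne_zero (pow_ne_zero _ (mul_ne_zero hq₀0 hs₁0)) (pow_ne_zero _ (mul_ne_zero hp₀0 hr₀0))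
  have hx₀A : E * (q₀*s₁)^n * (p₀*r₀)^n * g ∈ A :=
    hAg _ (mul_mem (mul_mem hERs (pow_mem (mul_mem hq₀Rs hs₁Rs) _))
      (pow_mem (mul_mem hp₀Rs hr₀Rs) _))
  rcases hACD ▸ hx₀A with hC | hD
  · -- C case
    have hnot := chain_core (Subring.closure {om d}) A C' D' g hACD hAg hg
      (Metric.ball cU εU) (Metric.ball cV εV) hCU hDV
      p₀ q₀ r₀ s₀ r₁ s₁ E hp₀Rs hq₀Rs hr₀Rs hs₀Rs hr₁Rs hs₁Rs hERs
      hp₀0 hq₀0 hr₀0 hs₀0 hr₁0 hs₁0 hE0 hρUfrac hσVfrac hσ₁V n hC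
    apply hnot
    have hrw : (r₁ * s₀) / (r₀ * s₁) = w1 := by
      have h1 : (r₁ * s₀) / (r₀ * s₁) = (r₁/s₁) / (r₀/s₀) := by
        field_simp
      rw [h1, ← hσ₁eq, show r₀ / s₀ = σ₀ by rw [hσ₀def, hσeq, hs₀def],
        mul_div_cancel_left₀ _ hσ0]
    rw [hrw]
    exact hw1U
  · -- D case
    have hx₀D : E' * (s₀*q₁)^n' * (r₀*p₀)^n' * g ∈ D' := by
      have : E' * (s₀*q₁)^n' * (r₀*p₀)^n' * g = E * (q₀*s₁)^n * (p₀*r₀)^n * g := by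
        rw [hEdef, hE'def]; ring
      rw [this]
      exact hD
    have hnot := chain_core (Subring.closure {om d}) A D' C' g
      (by rw [hACD, Set.union_comm]) hAg hg
      (Metric.ball cV εV) (Metric.ball cU εU) hDV hCU
      r₀ s₀ p₀ q₀ p₁ q₁ E' hr₀Rs hs₀Rs hp₀Rs hq₀Rs hp₁Rs hq₁Rs hE'Rs
      hr₀0 hs₀0 hp₀0 hq₀0 hp₁0 hq₁0 hE'0 hσVfrac hρUfrac hρ₁U n' hx₀D
    apply hnot
    have hrw : (p₁ * q₀) / (p₀ * q₁) = w2 := by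
      have h1 : (p₁ * q₀) / (p₀ * q₁) = (p₁/q₁) / (p₀/q₀) := by
        field_simp
      rw [h1, ← hρ₁eq, show p₀ / q₀ = ρ₀ by rw [hρ₀def, hρeq, hq₀def],
        mul_div_cancel_left₀ _ hρ0]
    rw [hrw]
    exact hw2V
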